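/- Let ℤ²₀ = ℤ² \ {0}, ℤ²₊ = {k ∈ ℤ²₀ : k₁ > 0, or k₁ = 0 and k₂ > 0}, ℤ²₋ = −ℤ²₊. For k ∈ ℤ²₀ and x ∈ ℝ², set e_k(x) = √2·cos(2π k·x) if k ∈ ℤ²₊ and e_k(x) = √2·sin(2π k·x) if k ∈ ℤ²₋, and set σ_k(x) = (k⊥/|k|)·e_k(x), where k⊥ = (k₂, −k₁) and |k| is the Euclidean norm. Let θ : ℤ²₀ → ℝ satisfy ∑_{k∈ℤ²₀} θ_k² = 1 and θ_k = θ_l whenever |k| = |l|. Then for every x ∈ ℝ², the family of 2×2 matrices (θ_k² · σ_k(x) σ_k(x)ᵀ)_{k∈ℤ²₀} is summable and ∑_{k∈ℤ²₀} θ_k² · σ_k(x) σ_k(x)ᵀ = (1/2)·I₂, where I₂ is the 2×2 identity matrix and σ_k(x) σ_k(x)ᵀ denotes the outer product. -/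

import Mathlib

/-- Euclidean norm of a lattice point `k ∈ ℤ²`. -/
noncomputable def latNorm (k : ℤ × ℤ) : ℝ := Real.sqrt ((k.1 : ℝ) ^ 2 + (k.2 : ℝ) ^ 2)

/-- The eigenfunctions `e_k` of the Laplacian on the 2D torus, viewed as 1-periodic
functions on `ℝ²`: `e_k(x) = √2 cos(2π k·x)` for `k ∈ ℤ²₊` and `√2 sin(2π k·x)` for
`k ∈ ℤ²₋`, where `ℤ²₊ = {k : k₁ > 0, or k₁ = 0 and k₂ > 0}`. -/
noncomputable def ek (k : ℤ × ℤ) (x : ℝ × ℝ) : ℝ :=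
  if 0 < k.1 ∨ (k.1 = 0 ∧ 0 < k.2)
  then Real.sqrt 2 * Real.cos (2 * Real.pi * ((k.1 : ℝ) * x.1 + (k.2 : ℝ) * x.2))
  else Real.sqrt 2 * Real.sin (2 * Real.pi * ((k.1 : ℝ) * x.1 + (k.2 : ℝ) * x.2))

/-- The divergence-free vector fields `σ_k(x) = (k⊥/|k|) e_k(x)`, `k⊥ = (k₂, −k₁)`. -/
noncomputable def sigmaVF (k : ℤ × ℤ) (x : ℝ × ℝ) : Fin 2 → ℝ :=
  fun i => (![(k.2 : ℝ), -(k.1 : ℝ)] i / latNorm k) * ek k x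

lemma latNorm_sq (k : ℤ × ℤ) : latNorm k ^ 2 = (k.1 : ℝ) ^ 2 + (k.2 : ℝ) ^ 2 :=
  Real.sq_sqrt (by positivity)

lemma latNorm_pos {k : ℤ × ℤ} (hk : k ≠ 0) : 0 < latNorm k := by
  apply Real.sqrt_pos.mpr
  rcases k with ⟨a, b⟩
  rw [Ne, Prod.mk_eq_zero, not_and_or] at hk
  rcases hk with h | h
  · have : (a : ℝ) ≠ 0 := Int.cast_ne_zero.mpr h
    positivity
  · have : (b : ℝ) ≠ 0 := Int.cast_ne_zero.mpr h
    positivity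

lemma latNorm_eq {p q : ℤ × ℤ} (h : (p.1 : ℝ) ^ 2 + (p.2 : ℝ) ^ 2 = (q.1 : ℝ) ^ 2 + (q.2 : ℝ) ^ 2) :
    latNorm p = latNorm q := by unfold latNorm; rw [h]

lemma ek_sq_add {k : ℤ × ℤ} (hk : k ≠ 0) (x : ℝ × ℝ) :
    ek k x ^ 2 + ek (-k) x ^ 2 = 2 := by
  rcases k with ⟨a, b⟩
  have h2 : (Real.sqrt 2) ^ 2 = 2 := Real.sq_sqrt (by norm_num)
  rw [Ne, Prod.mk_eq_zero, not_and_or] at hk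
  have hneg : (-(a, b) : ℤ × ℤ) = (-a, -b) := rfl
  set φ := 2 * Real.pi * ((a : ℝ) * x.1 + (b : ℝ) * x.2) with hφ
  have hψ : 2 * Real.pi * (((-a : ℤ) : ℝ) * x.1 + ((-b : ℤ) : ℝ) * x.2) = -φ := by
    push_cast; ring
  have hpyth := Real.sin_sq_add_cos_sq φ
  by_cases h : 0 < a ∨ (a = 0 ∧ 0 < b)
  · have h' : ¬(0 < -a ∨ (-a = 0 ∧ 0 < -b)) := by omega
    rw [ek, if_pos h, hneg, ek, if_neg h']
    simp only [hψ, Real.sin_neg]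
    linear_combination (Real.cos φ ^ 2 + Real.sin φ ^ 2) * h2 + 2 * hpyth
  · have h' : (0 < -a ∨ (-a = 0 ∧ 0 < -b)) := by omega
    rw [ek, if_neg h, hneg, ek, if_pos h']
    simp only [hψ, Real.cos_neg]
    linear_combination (Real.cos φ ^ 2 + Real.sin φ ^ 2) * h2 + 2 * hpyth

lemma abs_ek_le (k : ℤ × ℤ) (x : ℝ × ℝ) : |ek k x| ≤ Real.sqrt 2 := by
  have h0 : (0:ℝ) ≤ Real.sqrt 2 := Real.sqrt_nonneg 2
  unfold ek
  split <;> rw [abs_mul, abs_of_nonneg h0] <;>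
    nlinarith [Real.abs_cos_le_one (2 * Real.pi * ((k.1 : ℝ) * x.1 + (k.2 : ℝ) * x.2)),
      Real.abs_sin_le_one (2 * Real.pi * ((k.1 : ℝ) * x.1 + (k.2 : ℝ) * x.2))]

lemma abs_sigma_le {k : ℤ × ℤ} (hk : k ≠ 0) (x : ℝ × ℝ) (i : Fin 2) :
    |sigmaVF k x i| ≤ Real.sqrt 2 := by
  have hn := latNorm_pos hk
  have ha : |![(k.2 : ℝ), -(k.1 : ℝ)] i| ≤ latNorm k := by
    rw [← Real.sqrt_sq_eq_abs]
    apply Real.sqrt_le_sqrt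
    fin_cases i <;> simp [latNorm_sq] <;> nlinarith [sq_nonneg ((k.1:ℝ)), sq_nonneg ((k.2:ℝ))]
  rw [sigmaVF, abs_mul, abs_div, abs_of_pos hn]
  calc |![(k.2 : ℝ), -(k.1 : ℝ)] i| / latNorm k * |ek k x|
      ≤ 1 * Real.sqrt 2 := by
        apply mul_le_mul _ (abs_ek_le k x) (abs_nonneg _) (by norm_num)
        rw [div_le_one hn]; exact ha
    _ = Real.sqrt 2 := one_mul _

def negE : {k : ℤ × ℤ // k ≠ 0} ≃ {k : ℤ × ℤ // k ≠ 0} where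
  toFun k := ⟨-k.1, neg_ne_zero.mpr k.2⟩
  invFun k := ⟨-k.1, neg_ne_zero.mpr k.2⟩
  left_inv k := by simp
  right_inv k := by simp

def rotE : {k : ℤ × ℤ // k ≠ 0} ≃ {k : ℤ × ℤ // k ≠ 0} where
  toFun k := ⟨(k.1.2, -k.1.1), by
    rcases k with ⟨⟨a, b⟩, h⟩
    rw [Ne, Prod.mk_eq_zero, not_and_or] at h ⊢
    dsimp only
    omega⟩
  invFun k := ⟨(-k.1.2, k.1.1), by
    rcases k with ⟨⟨a, b⟩, h⟩
    rw [Ne, Prod.mk_eq_zero, not_and_or] at h ⊢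
    dsimp only
    omega⟩
  left_inv k := by rcases k with ⟨⟨a, b⟩, h⟩; simp
  right_inv k := by rcases k with ⟨⟨a, b⟩, h⟩; simp


set_option maxHeartbeats 1000000 in
/-- Covariance identity (3.3): if `θ ∈ ℓ²(ℤ²₀)` with `∑ θ_k² = 1` and
`θ_k = θ_l` whenever `|k| = |l|`, then `∑_k θ_k² σ_k(x) σ_k(x)ᵀ = (1/2) I₂` for every `x`. -/
theorem stmt_4 (θ : {k : ℤ × ℤ // k ≠ 0} → ℝ)
    (hθ1 : HasSum (fun k : {k : ℤ × ℤ // k ≠ 0} => θ k ^ 2) 1)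
    (hθ2 : ∀ k l : {k : ℤ × ℤ // k ≠ 0}, latNorm k.1 = latNorm l.1 → θ k = θ l)
    (x : ℝ × ℝ) :
    HasSum (fun k : {k : ℤ × ℤ // k ≠ 0} =>
        θ k ^ 2 • Matrix.vecMulVec (sigmaVF k.1 x) (sigmaVF k.1 x))
      ((1/2 : ℝ) • (1 : Matrix (Fin 2) (Fin 2) ℝ)) := by
  apply Pi.hasSum.mpr; intro i
  apply Pi.hasSum.mpr; intro j
  simp only [Matrix.smul_apply, Matrix.vecMulVec_apply, smul_eq_mul, Matrix.one_apply]
  set δ : ℝ := if i = j then 1 else 0 with hδdef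
  set g : {k : ℤ × ℤ // k ≠ 0} → ℝ :=
    fun k => θ k ^ 2 * (sigmaVF k.1 x i * sigmaVF k.1 x j) with hg
  have hsummable : Summable g := by
    apply Summable.of_norm_bounded (hθ1.summable.mul_left 2)
    intro k
    have h1 := abs_sigma_le k.2 x i
    have h2 := abs_sigma_le k.2 x j
    have hs : Real.sqrt 2 * Real.sqrt 2 = 2 := Real.mul_self_sqrt (by norm_num)
    have h3 : |sigmaVF k.1 x i * sigmaVF k.1 x j| ≤ 2 := by
      rw [abs_mul]
      nlinarith [abs_nonneg (sigmaVF k.1 x i), abs_nonneg (sigmaVF k.1 x j)]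
    rw [hg]
    dsimp only
    rw [Real.norm_eq_abs, abs_mul, abs_of_nonneg (sq_nonneg (θ k))]
    nlinarith [h3, sq_nonneg (θ k)]
  obtain ⟨S, hS⟩ := hsummable
  have h1 : HasSum (fun k => g (negE k)) S := (negE.hasSum_iff).mpr hS
  have h2 : HasSum (fun k => g (rotE k)) S := (rotE.hasSum_iff).mpr hS
  have h3 : HasSum (fun k => g (negE (rotE k))) S := ((rotE.trans negE).hasSum_iff).mpr hS
  have hadd : HasSum (fun k => g k + g (negE k) + (g (rotE k) + g (negE (rotE k))))
      (S + S + (S + S)) := (hS.add h1).add (h2.add h3)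
  have key : ∀ k, g k + g (negE k) + (g (rotE k) + g (negE (rotE k)))
      = (2 * δ) * θ k ^ 2 := by
    rintro ⟨⟨a, b⟩, hk⟩
    have hk0 : ¬(a = 0 ∧ b = 0) := by rwa [Ne, Prod.mk_eq_zero] at hk
    have hkn : ((-a, -b) : ℤ × ℤ) ≠ 0 := by rw [Ne, Prod.mk_eq_zero]; omega
    have hkr : ((b, -a) : ℤ × ℤ) ≠ 0 := by rw [Ne, Prod.mk_eq_zero]; omega
    have hknr : ((-b, a) : ℤ × ℤ) ≠ 0 := by rw [Ne, Prod.mk_eq_zero]; omega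
    have hne : negE ⟨(a, b), hk⟩ = ⟨(-a, -b), hkn⟩ := rfl
    have hre : rotE ⟨(a, b), hk⟩ = ⟨(b, -a), hkr⟩ := rfl
    have hnre : negE (rotE ⟨(a, b), hk⟩) = ⟨(-b, a), hknr⟩ :=
      Subtype.ext (by simp [negE, rotE])
    rw [hnre, hne, hre]
    have t1 : θ ⟨(-a, -b), hkn⟩ = θ ⟨(a, b), hk⟩ :=
      hθ2 _ _ (latNorm_eq (by push_cast; ring))
    have t2 : θ ⟨(b, -a), hkr⟩ = θ ⟨(a, b), hk⟩ :=
      hθ2 _ _ (latNorm_eq (by push_cast; ring))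
    have t3 : θ ⟨(-b, a), hknr⟩ = θ ⟨(a, b), hk⟩ :=
      hθ2 _ _ (latNorm_eq (by push_cast; ring))
    have hc : ek (a, b) x ^ 2 + ek (-a, -b) x ^ 2 = 2 := by
      have := ek_sq_add hk x; simpa using this
    have hd : ek (b, -a) x ^ 2 + ek (-b, a) x ^ 2 = 2 := by
      have := ek_sq_add hkr x; simpa using this
    have hn : latNorm (a, b) ≠ 0 := ne_of_gt (latNorm_pos hk)
    have hn2 : latNorm (a, b) ^ 2 = (a : ℝ) ^ 2 + (b : ℝ) ^ 2 := latNorm_sq _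
    have hl1 : latNorm (-a, -b) = latNorm (a, b) := latNorm_eq (by push_cast; ring)
    have hl2 : latNorm (b, -a) = latNorm (a, b) := latNorm_eq (by push_cast; ring)
    have hl3 : latNorm (-b, a) = latNorm (a, b) := latNorm_eq (by push_cast; ring)
    simp only [hg, sigmaVF, t1, t2, t3, hl1, hl2, hl3]
    push_cast
    fin_cases i <;> fin_cases j <;>
      simp only [hδdef, Fin.zero_eta, Fin.mk_one, Fin.isValue, zero_ne_one, one_ne_zero,
          if_false, Matrix.cons_val_zero, Matrix.cons_val_one, Matrix.head_cons,
        if_true, if_pos, reduceIte]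
    · field_simp
      linear_combination (θ ⟨(a, b), hk⟩ ^ 2 * (b:ℝ) ^ 2) * hc
        + (θ ⟨(a, b), hk⟩ ^ 2 * (a:ℝ) ^ 2) * hd - 2 * θ ⟨(a, b), hk⟩ ^ 2 * hn2
    · field_simp
      linear_combination (θ ⟨(a, b), hk⟩ ^ 2 * (a:ℝ) * (b:ℝ)) * (hd - hc)
    · field_simp
      linear_combination (θ ⟨(a, b), hk⟩ ^ 2 * (a:ℝ) * (b:ℝ)) * (hd - hc)
    · field_simp
      linear_combination (θ ⟨(a, b), hk⟩ ^ 2 * (a:ℝ) ^ 2) * hc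
        + (θ ⟨(a, b), hk⟩ ^ 2 * (b:ℝ) ^ 2) * hd - 2 * θ ⟨(a, b), hk⟩ ^ 2 * hn2
  rw [show (fun k => g k + g (negE k) + (g (rotE k) + g (negE (rotE k))))
      = fun k => (2 * δ) * θ k ^ 2 from funext key] at hadd
  have hδsum : HasSum (fun k => (2 * δ) * θ k ^ 2) ((2 * δ) * 1) := hθ1.mul_left _
  have hSval : S + S + (S + S) = (2 * δ) * 1 := hadd.unique hδsum
  have : (1 / 2 : ℝ) * δ = S := by linarith
  rw [← this] at hS
  exact hS
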